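/- Let p_X and p_Z' be probability density functions on measurable spaces (with Lebesgue measure), and let D be a measurable function with values in (0,1). If the original GAN generator loss V(D,g) := ∫ p_X log D dμ + ∫ p_Z' log(1 − D∘g) dμ is finite, E_{A∼p_X}[1/D(A)] < ∞, and E_{B∼p_Z'}[1/(1 − D(g(B)))] < ∞, then lim_{α ↑ 1} V_α(D,g) = V(D,g), where V_α(D,g) := (1/(α−1)) log(∫ p_X D^{α−1} dμ) + (1/(α−1)) log(∫ p_Z' (1 − D∘g)^{α−1} dμ) is the Rényi GAN generator loss of order α. -/

import Mathlib

open MeasureTheory Filter Topology Set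

lemma renyi_aux {β : Type*} [MeasurableSpace β] {μ : Measure β} {p f : β → ℝ}
    (hp_meas : Measurable p) (hf_meas : Measurable f)
    (hae : ∀ᵐ x ∂μ, 0 ≤ p x ∧ f x ∈ Set.Ioo (0:ℝ) 1)
    (hp_int : Integrable p μ)
    (hp_one : ∫ x, p x ∂μ = 1)
    (hinv : Integrable (fun x => p x / f x) μ) :
    Tendsto (fun t : ℝ => (1 / t) * Real.log (∫ x, p x * f x ^ t ∂μ))
      (𝓝[<] (0:ℝ)) (𝓝 (∫ x, p x * Real.log (f x) ∂μ)) := by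
  set L := ∫ x, p x * Real.log (f x) ∂μ with hL
  set F : ℝ → ℝ := fun t => ∫ x, p x * f x ^ t ∂μ with hF
  have hIoo : Ioo (-1:ℝ) 0 ∈ 𝓝[<] (0:ℝ) :=
    Ioo_mem_nhdsLT_of_mem (by constructor <;> norm_num)
  -- pointwise bound
  have hbound : ∀ t ∈ Ioo (-1:ℝ) 0, ∀ x, 0 ≤ p x → f x ∈ Set.Ioo (0:ℝ) 1 →
      f x ^ t - 1 ≤ (-t) * (1 / f x - 1) ∧ 1 ≤ f x ^ t := by
    intro t ht x hp0 hf01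
    obtain ⟨hf0, hf1⟩ := hf01
    constructor
    · have hconv := convexOn_exp.2 (Set.mem_univ (-Real.log (f x))) (Set.mem_univ (0:ℝ))
        (by linarith [ht.2] : (0:ℝ) ≤ -t) (by linarith [ht.1] : (0:ℝ) ≤ 1 + t) (by ring)
      simp only [smul_eq_mul, mul_zero, add_zero, Real.exp_zero] at hconv
      rw [Real.exp_neg, Real.exp_log hf0] at hconv
      have : f x ^ t = Real.exp (-t * -Real.log (f x)) := by
        rw [Real.rpow_def_of_pos hf0]; ring_nf
      rw [this]
      rw [inv_eq_one_div] at hconv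
      linarith
    · exact Real.one_le_rpow_of_pos_of_le_one_of_nonpos hf0 hf1.le ht.2.le
  -- integrability of p * f^t for t in Ioo (-1) 0
  have hint_t : ∀ t ∈ Ioo (-1:ℝ) 0, Integrable (fun x => p x * f x ^ t) μ := by
    intro t ht
    refine Integrable.mono' hinv ((hp_meas.mul (by fun_prop : Measurable fun x => f x ^ t)).aestronglyMeasurable) ?_
    filter_upwards [hae] with x ⟨hp0, hf01⟩
    have h1 := Real.rpow_le_rpow_of_exponent_ge hf01.1 hf01.2.le (by linarith [ht.1] : (-1:ℝ) ≤ t)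
    rw [Real.rpow_neg_one] at h1
    rw [Real.norm_eq_abs, abs_of_nonneg (mul_nonneg hp0 (Real.rpow_nonneg hf01.1.le t))]
    calc p x * f x ^ t ≤ p x * (f x)⁻¹ := by
          exact mul_le_mul_of_nonneg_left h1 hp0
      _ = p x / f x := by rw [div_eq_mul_inv]
  -- slope convergence
  have hslope : Tendsto (fun t : ℝ => ∫ x, p x * ((f x ^ t - 1) / t) ∂μ)
      (𝓝[<] (0:ℝ)) (𝓝 L) := by
    apply tendsto_integral_filter_of_dominated_convergence (fun x => p x / f x)
    · filter_upwards with t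
      exact ((hp_meas.mul ((((by fun_prop : Measurable fun x => f x ^ t)).sub measurable_const).div_const t)).aestronglyMeasurable)
    · filter_upwards [hIoo] with t ht
      filter_upwards [hae] with x ⟨hp0, hf01⟩
      obtain ⟨hle, hge⟩ := hbound t ht x hp0 hf01
      have ht0 : t < 0 := ht.2
      have hfpos := hf01.1
      have h1 : (f x ^ t - 1) / t ≤ 0 := div_nonpos_of_nonneg_of_nonpos (by linarith) ht0.le
      have h2 : -((f x ^ t - 1) / t) ≤ 1 / f x - 1 := by
        rw [neg_div' ]
        rw [div_le_iff_of_neg ht0]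
        nlinarith
      rw [Real.norm_eq_abs, abs_mul, abs_of_nonneg hp0, abs_of_nonpos h1]
      have h1f : (0:ℝ) < 1 / f x := by positivity
      calc p x * -((f x ^ t - 1) / t) ≤ p x * (1 / f x - 1) :=
            mul_le_mul_of_nonneg_left h2 hp0
        _ ≤ p x * (1 / f x) := by nlinarith
        _ = p x / f x := by rw [mul_one_div]
    · exact hinv
    · filter_upwards [hae] with x ⟨hp0, hf01⟩
      apply Tendsto.const_mul
      have hd : HasDerivAt (fun t : ℝ => f x ^ t) (Real.log (f x)) 0 := by
        have h1 : HasDerivAt (fun t : ℝ => Real.exp (Real.log (f x) * t))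
            (Real.exp (Real.log (f x) * 0) * Real.log (f x)) 0 := by
          have := ((hasDerivAt_id (0:ℝ)).const_mul (Real.log (f x))).exp
          simpa using this
        simp only [mul_zero, Real.exp_zero, one_mul] at h1
        apply h1.congr_of_eventuallyEq
        filter_upwards with t
        rw [Real.rpow_def_of_pos hf01.1]
      have := hasDerivAt_iff_tendsto_slope.1 hd
      have hmono : 𝓝[<] (0:ℝ) ≤ 𝓝[≠] (0:ℝ) :=
        nhdsWithin_mono _ (fun y hy => ne_of_lt hy)
      refine (this.mono_left hmono).congr ?_
      intro t
      simp [slope_def_field, Real.rpow_zero]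
  -- rewrite: slope integral equals (1/t)(F t - 1) eventually
  have hkey : ∀ᶠ t in 𝓝[<] (0:ℝ),
      ∫ x, p x * ((f x ^ t - 1) / t) ∂μ = (1 / t) * (F t - 1) := by
    filter_upwards [hIoo] with t ht
    have h1 : (fun x => p x * ((f x ^ t - 1) / t))
        = fun x => (1 / t) * (p x * f x ^ t - p x) := by
      funext x; field_simp
    rw [h1, MeasureTheory.integral_const_mul, integral_sub (hint_t t ht) hp_int, hp_one]
  have hA : Tendsto (fun t : ℝ => (1 / t) * (F t - 1)) (𝓝[<] (0:ℝ)) (𝓝 L) :=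
    hslope.congr' hkey
  -- F t → 1
  have hFsub : Tendsto (fun t : ℝ => F t - 1) (𝓝[<] (0:ℝ)) (𝓝 0) := by
    have hid : Tendsto (fun t : ℝ => t) (𝓝[<] (0:ℝ)) (𝓝 0) :=
      tendsto_id.mono_left nhdsWithin_le_nhds
    have := hid.mul hA
    rw [zero_mul] at this
    refine this.congr' ?_
    filter_upwards [self_mem_nhdsWithin] with t (ht : t < 0)
    have htne : t ≠ 0 := ht.ne
    field_simp
  have hF1 : Tendsto F (𝓝[<] (0:ℝ)) (𝓝 1) := by
    have := hFsub.add_const 1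
    simpa using this
  -- the auxiliary function φ
  set φ : ℝ → ℝ := fun y => if y = 0 then 1 else Real.log (1 + y) / y with hφ
  have hφ_eq : ∀ y : ℝ, Real.log (1 + y) = φ y * y := by
    intro y
    by_cases h : y = 0
    · simp [hφ, h]
    · simp only [hφ, if_neg h]; field_simp
  have hφ_tendsto : Tendsto φ (𝓝 (0:ℝ)) (𝓝 1) := by
    have hd : HasDerivAt (fun y : ℝ => Real.log (1 + y)) 1 0 := by
      have h1 : HasDerivAt (fun y : ℝ => 1 + y) 1 0 := (hasDerivAt_id 0).const_add 1
      have := h1.log (by norm_num)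
      simpa using this
    have h1 := hasDerivAt_iff_tendsto_slope.1 hd
    have h2 : Tendsto φ (𝓝[≠] (0:ℝ)) (𝓝 1) := by
      refine h1.congr' ?_
      filter_upwards [self_mem_nhdsWithin] with y (hy : y ≠ 0)
      simp [slope_def_field, hφ, if_neg hy]
    rw [← nhdsNE_sup_pure (0:ℝ)]
    rw [tendsto_sup]
    refine ⟨h2, ?_⟩
    have : φ 0 = 1 := by simp [hφ]
    rw [← this]
    exact tendsto_pure_nhds φ 0
  have hmain : Tendsto (fun t : ℝ => φ (F t - 1) * ((1 / t) * (F t - 1)))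
      (𝓝[<] (0:ℝ)) (𝓝 (1 * L)) :=
    (hφ_tendsto.comp hFsub).mul hA
  rw [one_mul] at hmain
  refine hmain.congr ?_
  intro t
  have h := hφ_eq (F t - 1)
  rw [show (1:ℝ) + (F t - 1) = F t by ring] at h
  rw [h]; ring


/-- Rényi GAN generator loss converges to the original GAN loss as `α ↑ 1`.
Let `pX` (on `X ⊆ ℝ^n`) and `pZ` (on `Z ⊆ ℝ^m`) be probability densities
(w.r.t. Lebesgue measure), let `D` be measurable with `D ∈ (0,1)` on the relevant
supports, and let `g` be a measurable generator.  If the original GAN generator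
loss `V(D,g) = ∫ pX log D + ∫ pZ log(1 - D∘g)` is finite (both integrands are
integrable), `E_{A∼pX}[1/D(A)] < ∞`, and `E_{B∼pZ}[1/(1 - D(g(B)))] < ∞` (the
corresponding quotients are integrable), then the Rényi GAN generator loss of
order `α`,
`V_α(D,g) = (1/(α-1)) log ∫ pX D^(α-1) + (1/(α-1)) log ∫ pZ (1 - D∘g)^(α-1)`,
tends to `V(D,g)` as `α ↑ 1`. -/
theorem stmt_15 {n m : ℕ}
    (pX : (Fin n → ℝ) → ℝ) (pZ : (Fin m → ℝ) → ℝ)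
    (X : Set (Fin n → ℝ)) (Z : Set (Fin m → ℝ))
    (hX : MeasurableSet X) (hZ : MeasurableSet Z)
    (hpX_meas : Measurable pX) (hpZ_meas : Measurable pZ)
    (hpX_nonneg : ∀ x, 0 ≤ pX x) (hpZ_nonneg : ∀ z, 0 ≤ pZ z)
    (hpX_pos : ∀ x ∈ X, 0 < pX x) (hpZ_pos : ∀ z ∈ Z, 0 < pZ z)
    (hpX_int : IntegrableOn pX X) (hpZ_int : IntegrableOn pZ Z)
    (hpX_one : ∫ x in X, pX x = 1) (hpZ_one : ∫ z in Z, pZ z = 1)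
    (D : (Fin n → ℝ) → ℝ) (g : (Fin m → ℝ) → (Fin n → ℝ))
    (hD_meas : Measurable D) (hg_meas : Measurable g)
    (hD_range : ∀ x ∈ X, D x ∈ Set.Ioo (0 : ℝ) 1)
    (hDg_range : ∀ z ∈ Z, D (g z) ∈ Set.Ioo (0 : ℝ) 1)
    (hV_fin₁ : IntegrableOn (fun x => pX x * Real.log (D x)) X)
    (hV_fin₂ : IntegrableOn (fun z => pZ z * Real.log (1 - D (g z))) Z)
    (h_inv₁ : IntegrableOn (fun x => pX x / D x) X)
    (h_inv₂ : IntegrableOn (fun z => pZ z / (1 - D (g z))) Z) :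
    Tendsto (fun α : ℝ =>
        (1 / (α - 1)) * Real.log (∫ x in X, pX x * D x ^ (α - 1)) +
        (1 / (α - 1)) * Real.log (∫ z in Z, pZ z * (1 - D (g z)) ^ (α - 1)))
      (𝓝[<] 1)
      (𝓝 ((∫ x in X, pX x * Real.log (D x)) +
          ∫ z in Z, pZ z * Real.log (1 - D (g z)))) := by
  have hmap : Tendsto (fun α : ℝ => α - 1) (𝓝[<] (1:ℝ)) (𝓝[<] (0:ℝ)) := by
    apply tendsto_nhdsWithin_of_tendsto_nhds_of_eventually_within
    · have h : Tendsto (fun α : ℝ => α - 1) (𝓝 (1:ℝ)) (𝓝 (1 - 1)) :=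
        (continuous_id.sub continuous_const).tendsto 1
      rw [sub_self] at h
      exact h.mono_left nhdsWithin_le_nhds
    · filter_upwards [self_mem_nhdsWithin] with α (hα : α < 1)
      simpa [Set.mem_Iio] using sub_neg.2 hα
  have hae1 : ∀ᵐ x ∂(volume.restrict X), 0 ≤ pX x ∧ D x ∈ Set.Ioo (0:ℝ) 1 := by
    filter_upwards [ae_restrict_mem hX] with x hx
    exact ⟨hpX_nonneg x, hD_range x hx⟩
  have hae2 : ∀ᵐ z ∂(volume.restrict Z), 0 ≤ pZ z ∧ (1 - D (g z)) ∈ Set.Ioo (0:ℝ) 1 := by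
    filter_upwards [ae_restrict_mem hZ] with z hz
    obtain ⟨h0, h1⟩ := hDg_range z hz
    exact ⟨hpZ_nonneg z, by constructor <;> linarith⟩
  have h1 := renyi_aux (μ := volume.restrict X) hpX_meas hD_meas hae1 hpX_int hpX_one h_inv₁
  have h2 := renyi_aux (μ := volume.restrict Z) hpZ_meas
      (measurable_const.sub (hD_meas.comp hg_meas)) hae2 hpZ_int hpZ_one h_inv₂
  exact (h1.comp hmap).add (h2.comp hmap)
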